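/- arXiv:1908.01068 — 2 statements merged into one kernel-verified Lean document; each statement's English description precedes it below -/
import Mathlib

section
/- If f : ℝᵈ × A → ℝ is continuous and nonnegative, F : ℝᵈ × A → ℝ is continuous, nonnegative and coercive (i.e., its sublevel sets are compact), and K ⊆ ℝᵈ is open with f coercive on K × A, then there exists a continuous coercive function F̃ : ℝᵈ × A → ℝ and a constant κ ≥ 1 such that f ≤ F̃ ≤ κ·(1_{B} + f·1_{K̃} + F·1_{K̃ᶜ}) on ℝᵈ × A, where K̃ := (K × A) ∪ {(x,u) : f(x,u) > F(x,u)} and B is any fixed nonempty open ball. -/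
open MeasureTheory Set Metric

/-- existence of a continuous coercive function `F̃` and constant `κ ≥ 1`
with `f ≤ F̃ ≤ κ (1_B + f 1_K̃ + F 1_K̃ᶜ)`. -/
theorem exists_coercive_dominating_function
    (d : ℕ) (A : Type*) [MetricSpace A] [CompactSpace A]
    (f F : (EuclideanSpace ℝ (Fin d)) × A → ℝ)
    (hf_cont : Continuous f) (hf_nonneg : ∀ p, 0 ≤ f p)
    (hF_cont : Continuous F) (hF_nonneg : ∀ p, 0 ≤ F p)
    (hF_coercive : ∀ C : ℝ, IsCompact {p : (EuclideanSpace ℝ (Fin d)) × A | F p ≤ C})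
    (K : Set (EuclideanSpace ℝ (Fin d))) (hK : IsOpen K)
    (hf_coercive_on_K : ∀ C : ℝ,
      IsCompact {p : (EuclideanSpace ℝ (Fin d)) × A | p.1 ∈ K ∧ f p ≤ C})
    (x₀ : EuclideanSpace ℝ (Fin d)) (r : ℝ) (hr : 0 < r) :
    ∃ (Ftilde : (EuclideanSpace ℝ (Fin d)) × A → ℝ) (κ : ℝ),
      Continuous Ftilde ∧
      (∀ C : ℝ, IsCompact {p : (EuclideanSpace ℝ (Fin d)) × A | Ftilde p ≤ C}) ∧
      1 ≤ κ ∧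
      (∀ p, f p ≤ Ftilde p) ∧
      (∀ p, Ftilde p ≤ κ *
        ((ball x₀ r ×ˢ (univ : Set A)).indicator (fun _ => (1 : ℝ)) p
          + ((K ×ˢ (univ : Set A)) ∪ {q | f q > F q}).indicator f p
          + (((K ×ˢ (univ : Set A)) ∪ {q | f q > F q})ᶜ).indicator F p)) := by
  classical
  rcases isEmpty_or_nonempty A with hA | hA
  · refine ⟨fun _ => 0, 1, continuous_const, ?_, le_refl 1,
      fun p => isEmptyElim p, fun p => isEmptyElim p⟩
    intro C
    have : {p : (EuclideanSpace ℝ (Fin d)) × A | (fun _ => (0:ℝ)) p ≤ C} = ∅ :=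
      Set.eq_empty_of_isEmpty _
    rw [this]
    exact isCompact_empty
  · obtain ⟨a₀⟩ := hA
    set p₀ : (EuclideanSpace ℝ (Fin d)) × A := (x₀, a₀) with hp₀
    set E : Set (((EuclideanSpace ℝ (Fin d)) × A) × ℝ) :=
      insert (p₀, (0:ℝ)) {q | q.1.1 ∈ K ∧ f q.1 ≤ q.2} with hE
    have hEne : E.Nonempty := ⟨(p₀, 0), mem_insert _ _⟩
    set ψ : (EuclideanSpace ℝ (Fin d)) × A → ℝ :=
      fun p => 2 * Metric.infDist (p, (0:ℝ)) E with hψdef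
    have hψ_cont : Continuous ψ :=
      continuous_const.mul
        ((continuous_infDist_pt E).comp (continuous_id.prodMk continuous_const))
    have hψ_nonneg : ∀ p, 0 ≤ ψ p := fun p =>
      mul_nonneg (by norm_num) Metric.infDist_nonneg
    have hψ_le : ∀ p : (EuclideanSpace ℝ (Fin d)) × A, p.1 ∈ K → ψ p ≤ 2 * f p := by
      intro p hp
      have hmem : (p, f p) ∈ E := Or.inr ⟨hp, le_refl _⟩
      have hd : dist ((p, (0:ℝ))) ((p, f p)) = f p := by
        rw [Prod.dist_eq]
        simp [Real.dist_eq, abs_of_nonneg (hf_nonneg p), hf_nonneg p]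
      have := Metric.infDist_le_dist_of_mem (x := (p, (0:ℝ))) hmem
      rw [hd] at this
      have h2 : (0:ℝ) ≤ 2 := by norm_num
      simpa [hψdef] using mul_le_mul_of_nonneg_left this h2
    set Ft : (EuclideanSpace ℝ (Fin d)) × A → ℝ :=
      fun p => max (f p) (min (F p) (2 * f p + ψ p)) with hFt
    have hFt_cont : Continuous Ft :=
      hf_cont.max (hF_cont.min ((continuous_const.mul hf_cont).add hψ_cont))
    refine ⟨Ft, 4, hFt_cont, ?_, by norm_num, fun p => le_max_left _ _, ?_⟩
    · -- coercivity
      intro C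
      set C' : ℝ := |C| + 1 with hC'
      have hCC' : C ≤ C' := le_trans (le_abs_self C) (by linarith)
      have hC'pos : 0 < C' := by positivity
      obtain ⟨R₁, hR₁pos, hR₁⟩ :=
        (hf_coercive_on_K C').isBounded.subset_closedBall_lt 0 p₀
      obtain ⟨R₂, hR₂pos, hR₂⟩ := (hF_coercive C).isBounded.subset_closedBall_lt 0 p₀
      set ρ : ℝ := max R₁ R₂ + 2 * C' + 1 with hρ
      have hsub : {p : (EuclideanSpace ℝ (Fin d)) × A | Ft p ≤ C} ⊆
          Metric.closedBall p₀ ρ := by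
        intro p hp
        simp only [Set.mem_setOf_eq, hFt] at hp
        have hmin : min (F p) (2 * f p + ψ p) ≤ C := (max_le_iff.mp hp).2
        rcases min_le_iff.mp hmin with hFC | hψC
        · have : p ∈ Metric.closedBall p₀ R₂ := hR₂ hFC
          have : dist p p₀ ≤ R₂ := Metric.mem_closedBall.mp this
          refine Metric.mem_closedBall.mpr (le_trans this ?_)
          have : R₂ ≤ max R₁ R₂ := le_max_right _ _
          linarith
        · have hψp : ψ p ≤ C := by
            have := hf_nonneg p; linarith
          have hinf : Metric.infDist (p, (0:ℝ)) E < C' := by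
            have : 2 * Metric.infDist (p, (0:ℝ)) E ≤ C := hψp
            have h0 : 0 ≤ Metric.infDist (p, (0:ℝ)) E := Metric.infDist_nonneg
            have hC0 : 0 ≤ C := by linarith
            have : Metric.infDist (p, (0:ℝ)) E ≤ C := by linarith
            have : Metric.infDist (p, (0:ℝ)) E ≤ |C| := le_trans this (le_abs_self C)
            linarith
          obtain ⟨q, hqE, hqd⟩ := (Metric.infDist_lt_iff hEne).mp hinf
          have hd1 : dist p q.1 ≤ dist ((p, (0:ℝ))) q := by
            rw [Prod.dist_eq]; exact le_max_left _ _
          have hd2 : dist (0:ℝ) q.2 ≤ dist ((p, (0:ℝ))) q := by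
            rw [Prod.dist_eq]; exact le_max_right _ _
          rcases hqE with hq0 | hqK
          · have : dist p p₀ < C' := by
              have : q.1 = p₀ := by rw [hq0]
              calc dist p p₀ = dist p q.1 := by rw [this]
                _ ≤ dist ((p, (0:ℝ))) q := hd1
                _ < C' := hqd
            refine Metric.mem_closedBall.mpr ?_
            have h1 : (0:ℝ) ≤ max R₁ R₂ := le_trans (le_of_lt hR₁pos) (le_max_left _ _)
            linarith
          · have hq2 : f q.1 ≤ C' := by
              have h1 : q.2 ≤ |q.2| := le_abs_self _
              have h2 : |q.2| = dist (0:ℝ) q.2 := by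
                rw [Real.dist_eq]; simp [abs_sub_comm]
              have := hqK.2
              have := hd2
              linarith [lt_of_le_of_lt hd2 hqd]
            have hq1 : q.1 ∈ Metric.closedBall p₀ R₁ := hR₁ ⟨hqK.1, hq2⟩
            refine Metric.mem_closedBall.mpr ?_
            calc dist p p₀ ≤ dist p q.1 + dist q.1 p₀ := dist_triangle _ _ _
              _ ≤ C' + R₁ := by
                  have := lt_of_le_of_lt hd1 hqd
                  have := Metric.mem_closedBall.mp hq1
                  linarith
              _ ≤ ρ := by
                  have : R₁ ≤ max R₁ R₂ := le_max_left _ _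
                  linarith
      have hclosed : IsClosed {p : (EuclideanSpace ℝ (Fin d)) × A | Ft p ≤ C} :=
        isClosed_le hFt_cont continuous_const
      exact (isCompact_closedBall p₀ ρ).of_isClosed_subset hclosed hsub
    · -- upper bound
      intro p
      have hind_ball : 0 ≤ (ball x₀ r ×ˢ (univ : Set A)).indicator
          (fun _ => (1 : ℝ)) p := by
        apply Set.indicator_nonneg; intro _ _; norm_num
      by_cases hKt : p ∈ (K ×ˢ (univ : Set A)) ∪ {q | f q > F q}
      · rw [Set.indicator_of_mem hKt f,
          Set.indicator_of_notMem (Set.notMem_compl_iff.mpr hKt) F]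
        have hFt4 : Ft p ≤ 4 * f p := by
          rcases hKt with hpK | hpf
          · have hK1 : p.1 ∈ K := (Set.mem_prod.mp hpK).1
            have := hψ_le p hK1
            have := hf_nonneg p
            exact max_le (by linarith) (le_trans (min_le_right _ _) (by linarith))
          · have hfF : F p < f p := hpf
            have := hf_nonneg p
            exact max_le (by linarith) (le_trans (min_le_left _ _) (by linarith))
        linarith
      · have hnot : p ∉ (K ×ˢ (univ : Set A)) ∪ {q | f q > F q} := hKt
        have hfF : f p ≤ F p := by
          by_contra h
          exact hnot (Or.inr (lt_of_not_ge h))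
        rw [Set.indicator_of_notMem hnot f,
          Set.indicator_of_mem (Set.mem_compl hnot) F]
        have hFtF : Ft p ≤ F p := max_le hfF (min_le_left _ _)
        have := hF_nonneg p
        linarith
end

section
/- Let ν be a finite Borel measure on ℝᵈ, m̃ ≥ 1, and F̃ ∈ C²(ℝᵈ) with F̃ ≥ 1, at most polynomial growth of degree m̃, and satisfying |x||∇F̃(x)| + |x|²‖∇²F̃(x)‖ ∈ O(F̃). Suppose further ∫ |z|^{m̃} ν(dz) < ∞ and ∫_{B₁} |z|² ν(dz) < ∞. Then the compensated nonlocal operator I F̃(x) := ∫_{ℝᵈ∖{0}} (F̃(x+y) − F̃(x) − ⟨y, ∇F̃(x)⟩) ν(dy) satisfies I F̃ ∈ O(F̃): there exists C with |I F̃(x)| ≤ C(1 + F̃(x)) for all x. -/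
set_option maxHeartbeats 2000000

open MeasureTheory Metric Set

section Helpers

variable {E : Type*} [NormedAddCommGroup E] [NormedSpace ℝ E]

lemma seg_mem_iff {x y z : E} (hz : z ∈ segment ℝ x (x + y)) :
    ∃ t ∈ Icc (0:ℝ) 1, z = x + t • y := by
  rw [segment_eq_image'] at hz
  obtain ⟨t, ht, rfl⟩ := hz
  exact ⟨t, ht, by simp⟩

lemma taylor_two_bound {f : E → ℝ} (hf : ContDiff ℝ 2 f) (x y : E) {B : ℝ}
    (hB : ∀ z ∈ segment ℝ x (x + y), ‖fderiv ℝ (fderiv ℝ f) z‖ ≤ B) :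
    |f (x + y) - f x - fderiv ℝ f x y| ≤ B * ‖y‖ ^ 2 := by
  have hf1 : ContDiff ℝ 1 (fderiv ℝ f) := hf.fderiv_right (by norm_num)
  have hdf : Differentiable ℝ f := hf.differentiable (by norm_num)
  have hdf' : Differentiable ℝ (fderiv ℝ f) := hf1.differentiable (by norm_num)
  have hseg : Convex ℝ (segment ℝ x (x + y)) := convex_segment _ _
  have hB0 : 0 ≤ B := le_trans (norm_nonneg (fderiv ℝ (fderiv ℝ f) x)) (hB x (left_mem_segment ℝ x (x + y)))
  have h1 : ∀ z ∈ segment ℝ x (x + y), ‖fderiv ℝ f z - fderiv ℝ f x‖ ≤ B * ‖y‖ := by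
    intro z hz
    have h := hseg.norm_image_sub_le_of_norm_fderiv_le (f := fderiv ℝ f)
      (fun w _ => hdf' w) hB (left_mem_segment ℝ x (x + y)) hz
    refine h.trans ?_
    obtain ⟨t, ht, rfl⟩ := seg_mem_iff hz
    have : ‖x + t • y - x‖ = |t| * ‖y‖ := by simp [norm_smul]
    rw [this]
    have habs : |t| ≤ 1 := abs_le.mpr ⟨by linarith [ht.1], ht.2⟩
    nlinarith [mul_nonneg (mul_nonneg hB0 (norm_nonneg y)) (sub_nonneg.mpr habs), norm_nonneg y, abs_nonneg t]
  set φ : E → ℝ := fun z => f z - fderiv ℝ f x z with hφ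
  have hdφ : ∀ w, DifferentiableAt ℝ φ w := fun w =>
    (hdf w).sub ((fderiv ℝ f x).differentiableAt)
  have hfdφ : ∀ w, fderiv ℝ φ w = fderiv ℝ f w - fderiv ℝ f x := by
    intro w
    rw [fderiv_fun_sub (hdf w) ((fderiv ℝ f x).differentiableAt), (fderiv ℝ f x).fderiv]
  have h2 := hseg.norm_image_sub_le_of_norm_fderiv_le (f := φ)
    (fun w _ => hdφ w) (fun w hw => by rw [hfdφ w]; exact h1 w hw)
    (left_mem_segment ℝ x (x + y)) (right_mem_segment ℝ x (x + y))
  have hφeq : φ (x + y) - φ x = f (x + y) - f x - fderiv ℝ f x y := by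
    simp only [hφ, map_add]
    ring
  have hyy : ‖x + y - x‖ = ‖y‖ := by simp
  rw [hφeq, hyy] at h2
  calc |f (x + y) - f x - fderiv ℝ f x y| = ‖f (x + y) - f x - fderiv ℝ f x y‖ := rfl
    _ ≤ B * ‖y‖ * ‖y‖ := h2
    _ = B * ‖y‖ ^ 2 := by ring

lemma gronwall_segment {f : E → ℝ} (hf : ContDiff ℝ 2 f) (x y : E) {K : ℝ} (hK : 0 ≤ K)
    (hpos : ∀ z, 1 ≤ f z)
    (hbound : ∀ t ∈ Icc (0:ℝ) 1, |fderiv ℝ f (x + t • y) y| ≤ K * (1 + f (x + t • y))) :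
    ∀ t ∈ Icc (0:ℝ) 1, 1 + f (x + t • y) ≤ (1 + f x) * Real.exp K := by
  have hdf : Differentiable ℝ f := hf.differentiable (by norm_num)
  set γ : ℝ → E := fun t => x + t • y with hγ
  have hγd : ∀ t : ℝ, HasDerivAt γ y t := by
    intro t
    have h := ((hasDerivAt_id t).smul_const y).const_add x
    simp only [one_smul] at h
    exact h
  set u : ℝ → ℝ := fun t => 1 + f (γ t) with hu'
  have hupos : ∀ t, 0 < u t := fun t => by
    have := hpos (γ t); simp only [hu']; linarith
  have hu : ∀ t : ℝ, HasDerivAt u (fderiv ℝ f (γ t) y) t := by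
    intro t
    have h := ((hdf (γ t)).hasFDerivAt.comp_hasDerivAt t (hγd t)).const_add 1
    exact h
  have hucont : Continuous u :=
    continuous_const.add (hf.continuous.comp (continuous_const.add (continuous_id.smul continuous_const)))
  have key := norm_le_gronwallBound_of_norm_deriv_right_le (f := u)
    (f' := fun t => fderiv ℝ f (γ t) y) (δ := 1 + f x) (K := K) (ε := 0) (a := 0) (b := 1)
    hucont.continuousOn (fun t _ => (hu t).hasDerivWithinAt)
    (by
      have h0 : u 0 = 1 + f x := by simp [hu', hγ]
      rw [Real.norm_eq_abs, abs_of_pos (hupos 0), h0])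
    (by
      intro t ht
      rw [Real.norm_eq_abs, Real.norm_eq_abs, abs_of_pos (hupos t)]
      have := hbound t ⟨ht.1, le_of_lt ht.2⟩
      simp only [hu']
      linarith)
  intro t ht
  have h := key t ht
  rw [gronwallBound_ε0, Real.norm_eq_abs, abs_of_pos (hupos t)] at h
  have hfx : (0:ℝ) < 1 + f x := by have := hpos x; linarith
  have hexp : Real.exp (K * (t - 0)) ≤ Real.exp K := by
    apply Real.exp_le_exp.mpr
    nlinarith [ht.1, ht.2]
  calc 1 + f (x + t • y) = u t := rfl
    _ ≤ (1 + f x) * Real.exp (K * (t - 0)) := h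
    _ ≤ (1 + f x) * Real.exp K := by nlinarith [Real.exp_pos (K * (t-0))]

lemma key_pointwise
    {F : E → ℝ} (hF_smooth : ContDiff ℝ 2 F) (hF_ge_one : ∀ x, 1 ≤ F x)
    {mt : ℝ} (hmt : 1 ≤ mt)
    {C₀ : ℝ} (hC₀ : 0 ≤ C₀) (hF_growth : ∀ x, |F x| ≤ C₀ * (1 + ‖x‖ ^ mt))
    {C₁ : ℝ} (hC₁ : 0 ≤ C₁)
    (hF_derivs : ∀ x, ‖x‖ * ‖fderiv ℝ F x‖ + ‖x‖ ^ 2 * ‖fderiv ℝ (fderiv ℝ F) x‖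
      ≤ C₁ * (1 + F x))
    {A₂ : ℝ} (hA₂0 : 0 ≤ A₂)
    (hA₂ : ∀ z ∈ closedBall (0:E) 5, ‖fderiv ℝ (fderiv ℝ F) z‖ ≤ A₂)
    {K₀ : ℝ} (hK₀0 : 0 ≤ K₀) (hgrad : ∀ z, ‖fderiv ℝ F z‖ ≤ K₀ * (1 + F z)) :
    ∀ x y, |F (x + y) - F x - fderiv ℝ F x y| ≤
      ((max (4*A₂) (4*C₁*Real.exp (2*C₁)) + C₀ + 1)
        + (C₀ * 3 ^ mt + K₀ * 2 ^ mt) * ‖y‖ ^ mt) * (1 + F x) := by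
  intro x y
  set CB := max (4*A₂) (4*C₁*Real.exp (2*C₁)) with hCB
  have hCB0 : 0 ≤ CB := le_trans (by linarith) (le_max_left _ _)
  have hmt0 : (0:ℝ) ≤ mt := by linarith
  have h3p : (0:ℝ) ≤ (3:ℝ) ^ mt := Real.rpow_nonneg (by norm_num) mt
  have h2p : (0:ℝ) ≤ (2:ℝ) ^ mt := Real.rpow_nonneg (by norm_num) mt
  have hy0 : (0:ℝ) ≤ ‖y‖ ^ mt := Real.rpow_nonneg (norm_nonneg _) mt
  have hFx : 1 ≤ F x := hF_ge_one x
  have hQ0 : 0 ≤ C₀ * 3 ^ mt + K₀ * 2 ^ mt := by positivity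
  rcases le_or_gt ‖y‖ ((1 + ‖x‖)/2) with hyR | hyR
  · -- small y : Taylor estimate
    suffices h : |F (x + y) - F x - fderiv ℝ F x y| ≤ CB * (1 + F x) by
      have : 0 ≤ (C₀ * 3 ^ mt + K₀ * 2 ^ mt) * ‖y‖ ^ mt * (1 + F x) := by positivity
      nlinarith [mul_nonneg hCB0 (by linarith : (0:ℝ) ≤ 1 + F x)]
    rcases le_or_gt ‖x‖ 3 with hx3 | hx3
    · -- ‖x‖ ≤ 3 : Hessian bounded on a compact ball
      have hy2 : ‖y‖ ≤ 2 := by linarith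
      have hbd : ∀ z ∈ segment ℝ x (x + y), ‖fderiv ℝ (fderiv ℝ F) z‖ ≤ A₂ := by
        intro z hz
        obtain ⟨t, ht, rfl⟩ := seg_mem_iff hz
        refine hA₂ _ ?_
        rw [mem_closedBall, dist_zero_right]
        have h1 : ‖x + t • y‖ ≤ ‖x‖ + ‖t • y‖ := norm_add_le _ _
        have h2 : ‖t • y‖ = |t| * ‖y‖ := by rw [norm_smul, Real.norm_eq_abs]
        have h3 : |t| ≤ 1 := abs_le.mpr ⟨by linarith [ht.1], ht.2⟩
        nlinarith [abs_nonneg t, norm_nonneg y]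
      have := taylor_two_bound hF_smooth x y hbd
      refine this.trans ?_
      have : ‖y‖ ^ 2 ≤ 4 := by nlinarith [norm_nonneg y]
      calc A₂ * ‖y‖ ^ 2 ≤ A₂ * 4 := by nlinarith
        _ ≤ (4 * A₂) * (1 + F x) := by nlinarith
        _ ≤ CB * (1 + F x) := by
            have := le_max_left (4*A₂) (4*C₁*Real.exp (2*C₁))
            nlinarith
    · -- ‖x‖ > 3 : use decay of the Hessian plus Grönwall comparability
      have hzlow : ∀ t ∈ Icc (0:ℝ) 1, (‖x‖ - 1)/2 ≤ ‖x + t • y‖ := by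
        intro t ht
        have h1 : ‖x‖ ≤ ‖x + t • y‖ + ‖t • y‖ := by
          have := norm_sub_le (x + t • y) (t • y)
          simpa using this
        have h2 : ‖t • y‖ = |t| * ‖y‖ := by rw [norm_smul, Real.norm_eq_abs]
        have h3 : |t| ≤ 1 := abs_le.mpr ⟨by linarith [ht.1], ht.2⟩
        nlinarith [abs_nonneg t, norm_nonneg y]
      have hgron := gronwall_segment hF_smooth x y (K := 2*C₁) (by linarith) hF_ge_one ?_
      swap
      · intro t ht
        set z := x + t • y with hzdef
        have hz1 : 1 ≤ ‖z‖ := by have := hzlow t ht; linarith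
        have hd := hF_derivs z
        have hgz : ‖z‖ * ‖fderiv ℝ F z‖ ≤ C₁ * (1 + F z) := by
          nlinarith [mul_nonneg (sq_nonneg ‖z‖) (norm_nonneg (fderiv ℝ (fderiv ℝ F) z)),
            sq_nonneg ‖z‖, norm_nonneg (fderiv ℝ (fderiv ℝ F) z)]
        have hop : |fderiv ℝ F z y| ≤ ‖fderiv ℝ F z‖ * ‖y‖ := (fderiv ℝ F z).le_opNorm y
        have hy2z : ‖y‖ ≤ 2 * ‖z‖ := by have := hzlow t ht; linarith
        refine hop.trans ?_
        nlinarith [norm_nonneg (fderiv ℝ F z), norm_nonneg z]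
      -- Hessian bound on the segment
      have hxpos : (0:ℝ) < ((‖x‖ - 1)/2)^2 := by nlinarith
      set c := C₁ * ((1 + F x) * Real.exp (2*C₁)) with hc
      have hc0 : 0 ≤ c := by positivity
      set B := c / ((‖x‖ - 1)/2)^2 with hB
      have hB0 : 0 ≤ B := div_nonneg hc0 (le_of_lt hxpos)
      have hbd : ∀ z ∈ segment ℝ x (x + y), ‖fderiv ℝ (fderiv ℝ F) z‖ ≤ B := by
        intro z hz
        obtain ⟨t, ht, rfl⟩ := seg_mem_iff hz
        set z := x + t • y
        have hz1 : (‖x‖ - 1)/2 ≤ ‖z‖ := hzlow t ht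
        have hd := hF_derivs z
        have hhz : ‖z‖ ^ 2 * ‖fderiv ℝ (fderiv ℝ F) z‖ ≤ C₁ * (1 + F z) := by
          nlinarith [mul_nonneg (norm_nonneg z) (norm_nonneg (fderiv ℝ F z))]
        have hcomp : C₁ * (1 + F z) ≤ c := by
          have := hgron t ht
          rw [hc]
          nlinarith
        rw [hB, le_div_iff₀ hxpos]
        have hsq : ((‖x‖ - 1)/2)^2 ≤ ‖z‖^2 := by nlinarith [norm_nonneg z]
        nlinarith [norm_nonneg (fderiv ℝ (fderiv ℝ F) z)]
      have := taylor_two_bound hF_smooth x y hbd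
      refine this.trans ?_
      have hyb : ‖y‖^2 ≤ ((1 + ‖x‖)/2)^2 := by nlinarith [norm_nonneg y]
      have step1 : B * ‖y‖^2 ≤ B * (4 * ((‖x‖ - 1)/2)^2) := by
        have h4 : ((1 + ‖x‖)/2)^2 ≤ 4 * ((‖x‖ - 1)/2)^2 := by nlinarith
        nlinarith
      have step2 : B * (4 * ((‖x‖ - 1)/2)^2) = 4 * c := by
        have hne : ‖x‖ - 1 ≠ 0 := ne_of_gt (by linarith : (0:ℝ) < ‖x‖ - 1)
        rw [hB]; field_simp
      rw [step2] at step1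
      refine step1.trans ?_
      have : 4 * c = (4*C₁*Real.exp (2*C₁)) * (1 + F x) := by rw [hc]; ring
      rw [this]
      have := le_max_right (4*A₂) (4*C₁*Real.exp (2*C₁))
      nlinarith
  · -- large y
    have hy2 : 1/2 ≤ ‖y‖ := by nlinarith [norm_nonneg x]
    have htri : |F (x + y) - F x - fderiv ℝ F x y|
        ≤ |F (x + y)| + |F x| + |fderiv ℝ F x y| := by
      calc |F (x + y) - F x - fderiv ℝ F x y|
          ≤ |F (x + y) - F x| + |fderiv ℝ F x y| := abs_sub _ _
        _ ≤ |F (x + y)| + |F x| + |fderiv ℝ F x y| := by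
            have := abs_sub (F (x + y)) (F x); linarith
    -- bound each term
    have hxy3 : ‖x + y‖ ≤ 3 * ‖y‖ := by
      have := norm_add_le x y
      nlinarith [norm_nonneg x]
    have hb1 : |F (x + y)| ≤ C₀ + C₀ * 3 ^ mt * ‖y‖ ^ mt := by
      have h := hF_growth (x + y)
      have hpow : ‖x + y‖ ^ mt ≤ 3 ^ mt * ‖y‖ ^ mt := by
        calc ‖x + y‖ ^ mt ≤ (3 * ‖y‖) ^ mt :=
              Real.rpow_le_rpow (norm_nonneg _) hxy3 hmt0
          _ = 3 ^ mt * ‖y‖ ^ mt := Real.mul_rpow (by norm_num) (norm_nonneg _)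
      nlinarith
    have hb2 : |F x| = F x := abs_of_pos (by linarith)
    have hwpow : ‖y‖ ≤ 2 ^ mt * ‖y‖ ^ mt := by
      rcases le_or_gt ‖y‖ 1 with h1 | h1
      · have hlow : ((1:ℝ)/2) ^ mt ≤ ‖y‖ ^ mt :=
          Real.rpow_le_rpow (by norm_num) hy2 hmt0
        have hprod : (2:ℝ) ^ mt * ((1:ℝ)/2) ^ mt = 1 := by
          rw [← Real.mul_rpow (by norm_num) (by norm_num)]
          norm_num
        nlinarith
      · have h1' : ‖y‖ ^ (1:ℝ) ≤ ‖y‖ ^ mt :=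
          Real.rpow_le_rpow_of_exponent_le (le_of_lt h1) hmt
        rw [Real.rpow_one] at h1'
        have h2' : (1:ℝ) ≤ (2:ℝ) ^ mt := Real.one_le_rpow (by norm_num) hmt0
        nlinarith
    have hb3 : |fderiv ℝ F x y| ≤ K₀ * (1 + F x) * (2 ^ mt * ‖y‖ ^ mt) := by
      have hop : |fderiv ℝ F x y| ≤ ‖fderiv ℝ F x‖ * ‖y‖ := (fderiv ℝ F x).le_opNorm y
      have hg := hgrad x
      calc |fderiv ℝ F x y| ≤ ‖fderiv ℝ F x‖ * ‖y‖ := hop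
        _ ≤ (K₀ * (1 + F x)) * ‖y‖ := by nlinarith [norm_nonneg y, norm_nonneg (fderiv ℝ F x)]
        _ ≤ K₀ * (1 + F x) * (2 ^ mt * ‖y‖ ^ mt) :=
            mul_le_mul_of_nonneg_left hwpow (mul_nonneg hK₀0 (by linarith))
    refine htri.trans ?_
    rw [hb2]
    nlinarith [mul_nonneg hCB0 (by linarith : (0:ℝ) ≤ 1 + F x),
      mul_nonneg hC₀ (by linarith : (0:ℝ) ≤ F x - 1),
      mul_nonneg (mul_nonneg (mul_nonneg hC₀ h3p) hy0) (by linarith : (0:ℝ) ≤ F x)]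

end Helpers

/-- if `F̃ ∈ C²`, `F̃ ≥ 1`, has polynomial growth of degree `m̃` and satisfies
`|x||∇F̃(x)| + |x|²‖∇²F̃(x)‖ ∈ O(F̃)`, and `ν` is finite with `∫ |z|^m̃ ν(dz) < ∞` and
`∫_{B₁} |z|² ν(dz) < ∞`, then the compensated nonlocal term
`I F̃(x) = ∫_{ℝᵈ∖{0}} (F̃(x+y) − F̃(x) − ⟨y,∇F̃(x)⟩) ν(dy)` satisfies `I F̃ ∈ O(F̃)`. -/
theorem compensated_nonlocal_O_of_F
    (d : ℕ) (ν : Measure (EuclideanSpace ℝ (Fin d))) [IsFiniteMeasure ν]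
    (mt : ℝ) (hmt : 1 ≤ mt)
    (F : EuclideanSpace ℝ (Fin d) → ℝ)
    (hF_smooth : ContDiff ℝ 2 F)
    (hF_ge_one : ∀ x, 1 ≤ F x)
    (C₀ : ℝ) (hF_growth : ∀ x, |F x| ≤ C₀ * (1 + ‖x‖ ^ mt))
    (C₁ : ℝ) (hF_derivs : ∀ x,
      ‖x‖ * ‖fderiv ℝ F x‖ + ‖x‖ ^ 2 * ‖fderiv ℝ (fderiv ℝ F) x‖ ≤ C₁ * (1 + F x))
    (hmom : Integrable (fun z => ‖z‖ ^ mt) ν)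
    (hmom2 : Integrable (fun z => ‖z‖ ^ 2)
      (ν.restrict (ball (0 : EuclideanSpace ℝ (Fin d)) 1))) :
    ∃ C : ℝ, ∀ x,
      |∫ y in ({0}ᶜ : Set (EuclideanSpace ℝ (Fin d))),
        (F (x + y) - F x - fderiv ℝ F x y) ∂ν| ≤ C * (1 + F x) := by
  have hf1 : ContDiff ℝ 1 (fderiv ℝ F) := hF_smooth.fderiv_right (by norm_num)
  have hcont' : Continuous (fderiv ℝ F) := hf1.continuous
  have hcont'' : Continuous (fderiv ℝ (fderiv ℝ F)) := hf1.continuous_fderiv (by norm_num)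
  obtain ⟨A₁, hA₁⟩ := (isCompact_closedBall (0 : EuclideanSpace ℝ (Fin d))
    1).exists_bound_of_continuousOn hcont'.continuousOn
  obtain ⟨A₂', hA₂'⟩ := (isCompact_closedBall (0 : EuclideanSpace ℝ (Fin d))
    5).exists_bound_of_continuousOn (f := fderiv ℝ (fderiv ℝ F)) hcont''.continuousOn
  have hC₁ : 0 ≤ C₁ := by
    have h := hF_derivs 0
    have h1 := hF_ge_one 0
    simp only [norm_zero, zero_mul, zero_add, zero_pow, ne_eq, OfNat.ofNat_ne_zero,
      not_false_eq_true] at h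
    nlinarith
  have hC₀ : 0 ≤ C₀ := by
    have h := hF_growth 0
    have h1 := hF_ge_one 0
    rw [norm_zero, Real.zero_rpow (by linarith : mt ≠ 0)] at h
    have h2 : (1:ℝ) ≤ |F 0| := le_trans h1 (le_abs_self _)
    nlinarith
  set A₂ := max A₂' 0 with hA₂def
  have hA₂0 : 0 ≤ A₂ := le_max_right _ _
  have hA₂ : ∀ z ∈ closedBall (0 : EuclideanSpace ℝ (Fin d)) 5,
      ‖fderiv ℝ (fderiv ℝ F) z‖ ≤ A₂ := fun z hz => (hA₂' z hz).trans (le_max_left _ _)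
  set K₀ := max A₁ 0 + C₁ with hK₀def
  have hK₀0 : 0 ≤ K₀ := add_nonneg (le_max_right _ _) hC₁
  have hgrad : ∀ z, ‖fderiv ℝ F z‖ ≤ K₀ * (1 + F z) := by
    intro z
    have hFz := hF_ge_one z
    rcases le_or_gt ‖z‖ 1 with hz1 | hz1
    · have h := hA₁ z (by rwa [mem_closedBall, dist_zero_right])
      have h2 : A₁ ≤ max A₁ 0 := le_max_left _ _
      have h3 : (0:ℝ) ≤ max A₁ 0 := le_max_right _ _
      nlinarith [mul_nonneg hC₁ (by linarith : (0:ℝ) ≤ 1 + F z),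
        mul_nonneg h3 (by linarith : (0:ℝ) ≤ F z)]
    · have hd := hF_derivs z
      have h1 : ‖z‖ * ‖fderiv ℝ F z‖ ≤ C₁ * (1 + F z) := by
        nlinarith [mul_nonneg (sq_nonneg ‖z‖) (norm_nonneg (fderiv ℝ (fderiv ℝ F) z))]
      have h2 : ‖fderiv ℝ F z‖ ≤ ‖z‖ * ‖fderiv ℝ F z‖ := by
        nlinarith [norm_nonneg (fderiv ℝ F z)]
      have h3 : (0:ℝ) ≤ max A₁ 0 := le_max_right _ _
      nlinarith [mul_nonneg h3 (by linarith : (0:ℝ) ≤ 1 + F z)]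
  have key := key_pointwise hF_smooth hF_ge_one hmt hC₀ hF_growth hC₁ hF_derivs
    hA₂0 hA₂ hK₀0 hgrad
  set P := max (4*A₂) (4*C₁*Real.exp (2*C₁)) + C₀ + 1 with hPdef
  set Q := C₀ * 3 ^ mt + K₀ * 2 ^ mt with hQdef
  have hP0 : 0 ≤ P := by
    have : (0:ℝ) ≤ max (4*A₂) (4*C₁*Real.exp (2*C₁)) :=
      le_trans (by linarith) (le_max_left _ _)
    linarith
  have hQ0 : 0 ≤ Q := by
    have h2p : (0:ℝ) ≤ (2:ℝ) ^ mt := Real.rpow_nonneg (by norm_num) mt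
    have h3p : (0:ℝ) ≤ (3:ℝ) ^ mt := Real.rpow_nonneg (by norm_num) mt
    positivity
  set M := ∫ z, ‖z‖ ^ mt ∂ν with hMdef
  refine ⟨P * (ν univ).toReal + Q * M, fun x => ?_⟩
  have hfx1 : (0:ℝ) ≤ 1 + F x := by linarith [hF_ge_one x]
  have hφint : Integrable (fun y : EuclideanSpace ℝ (Fin d) =>
      (P + Q * ‖y‖ ^ mt) * (1 + F x)) ν :=
    ((integrable_const P).add (hmom.const_mul Q)).mul_const _
  have hφnn : ∀ y : EuclideanSpace ℝ (Fin d),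
      0 ≤ (P + Q * ‖y‖ ^ mt) * (1 + F x) := fun y =>
    mul_nonneg (add_nonneg hP0 (mul_nonneg hQ0 (Real.rpow_nonneg (norm_nonneg y) mt))) hfx1
  calc |∫ y in ({0}ᶜ : Set (EuclideanSpace ℝ (Fin d))),
        (F (x + y) - F x - fderiv ℝ F x y) ∂ν|
      = ‖∫ y in ({0}ᶜ : Set (EuclideanSpace ℝ (Fin d))),
        (F (x + y) - F x - fderiv ℝ F x y) ∂ν‖ := (Real.norm_eq_abs _).symm
    _ ≤ ∫ y in ({0}ᶜ : Set (EuclideanSpace ℝ (Fin d))),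
        ‖F (x + y) - F x - fderiv ℝ F x y‖ ∂ν := norm_integral_le_integral_norm _
    _ ≤ ∫ y in ({0}ᶜ : Set (EuclideanSpace ℝ (Fin d))),
        (P + Q * ‖y‖ ^ mt) * (1 + F x) ∂ν := by
        refine integral_mono_of_nonneg (Filter.Eventually.of_forall fun y => norm_nonneg _)
          (hφint.restrict) (Filter.Eventually.of_forall fun y => ?_)
        simpa [Real.norm_eq_abs] using key x y
    _ ≤ ∫ y, (P + Q * ‖y‖ ^ mt) * (1 + F x) ∂ν :=
        setIntegral_le_integral hφint (Filter.Eventually.of_forall hφnn)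
    _ = (P * (ν univ).toReal + Q * M) * (1 + F x) := by
        rw [integral_mul_const, integral_add (integrable_const P) (hmom.const_mul Q),
          integral_const, integral_const_mul]
        rw [smul_eq_mul, ← hMdef, measureReal_def]
        ring
end
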